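/- For the generalized hybrid Fibonacci sequence HJ_n, the ordinary generating function satisfies (1 − p·t − q·t²)·Σ_{r≥0} HJ_r t^r = HJ_0 + t·(HJ_1 − p·HJ_0), equivalently its power series equals [a + b·i + (pb+qa)·ε + ((p²+q)b + pqa)·h + t·((b − pa) + qa·i + qb·ε + (pqb + q²a)·h)] / (1 − pt − qt²). -/

import Mathlib

open Matrix

noncomputable section

/-- Hybrid numbers modelled via their faithful matrix representation:
the map a+b·i+c·ε+d·h ↦ !![a+c, b-c+d; c-b+d, a-c] is an ℝ-algebra
isomorphism onto M₂(ℝ). -/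
abbrev HybridK : Type := Matrix (Fin 2) (Fin 2) ℝ

/-- the hybrid unit i (i² = −1) -/
def hi : HybridK := !![0, 1; -1, 0]

/-- the hybrid unit ε (ε² = 0) -/
def heps : HybridK := !![1, -1; 1, -1]

/-- the hybrid unit h (h² = 1) -/
def hh : HybridK := !![0, 1; 1, 0]

/-- the hybrid number a + b·i + c·ε + d·h -/
def hyb (a b c d : ℝ) : HybridK := a • (1 : HybridK) + b • hi + c • heps + d • hh

/-- hybrid sequence attached to a real sequence:  x_n + x_{n+1}·i + x_{n+2}·ε + x_{n+3}·h -/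
def hybSeq (x : ℕ → ℝ) (n : ℕ) : HybridK := hyb (x n) (x (n+1)) (x (n+2)) (x (n+3))

lemma hyb_sub_smul (a1 b1 c1 d1 a2 b2 c2 d2 p : ℝ) :
    hyb a1 b1 c1 d1 - p • hyb a2 b2 c2 d2 = hyb (a1 - p*a2) (b1 - p*b2) (c1 - p*c2) (d1 - p*d2) := by
  simp only [hyb, smul_add, smul_smul]
  module

lemma hyb_rec (a1 b1 c1 d1 a2 b2 c2 d2 p q : ℝ) :
    hyb (p*a1 + q*a2) (p*b1 + q*b2) (p*c1 + q*c2) (p*d1 + q*d2)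
      = p • hyb a1 b1 c1 d1 + q • hyb a2 b2 c2 d2 := by
  simp only [hyb, smul_add, smul_smul]
  module

/-- generating function of the generalized hybrid Fibonacci numbers. -/
theorem hybrid_horadam_gf (p q a b : ℝ) (J : ℕ → ℝ)
    (hJ0 : J 0 = a) (hJ1 : J 1 = b)
    (hrec : ∀ n : ℕ, J (n + 2) = p * J (n + 1) + q * J n) :
    (1 - PowerSeries.C (R := HybridK) (p • (1 : HybridK)) * PowerSeries.X
       - PowerSeries.C (R := HybridK) (q • (1 : HybridK)) * PowerSeries.X ^ 2)
      * PowerSeries.mk (fun r => hybSeq J r)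
    = PowerSeries.C (R := HybridK) (hybSeq J 0)
      + PowerSeries.X * PowerSeries.C (R := HybridK) (hybSeq J 1 - p • hybSeq J 0) ∧
    hybSeq J 0 = hyb a b (p * b + q * a) ((p ^ 2 + q) * b + p * q * a) ∧
    hybSeq J 1 - p • hybSeq J 0
      = hyb (b - p * a) (q * a) (q * b) (p * q * b + q ^ 2 * a) := by
  have key : ∀ n, hybSeq J (n+2) = p • hybSeq J (n+1) + q • hybSeq J n := by
    intro n
    simp only [hybSeq]
    rw [show n+1+1 = n+2 from rfl, show n+1+2 = n+3 from rfl, show n+1+3 = n+4 from rfl,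
      show n+2+1 = n+3 from rfl, show n+2+2 = n+4 from rfl, show n+2+3 = n+5 from rfl]
    rw [show n+5 = n+3+2 from rfl, hrec (n+3), show n+4 = n+2+2 from rfl, hrec (n+2),
      show n+3 = n+1+2 from rfl, hrec (n+1), hrec n]
    exact hyb_rec _ _ _ _ _ _ _ _ p q
  refine ⟨?_, ?_, ?_⟩
  · ext n
    simp only [sub_mul, one_mul, map_sub, map_add]
    match n with
    | 0 =>
      simp [PowerSeries.coeff_zero_eq_constantCoeff]
    | 1 =>
      rw [mul_assoc, PowerSeries.coeff_C_mul, PowerSeries.coeff_succ_X_mul]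
      simp [PowerSeries.coeff_one, pow_two, mul_assoc,
        PowerSeries.coeff_succ_X_mul, smul_mul_assoc]
    | (n+2) =>
      rw [mul_assoc, PowerSeries.coeff_C_mul, PowerSeries.coeff_succ_X_mul]
      rw [pow_two, mul_assoc, mul_assoc, PowerSeries.coeff_C_mul,
        PowerSeries.coeff_succ_X_mul, PowerSeries.coeff_succ_X_mul]
      simp only [PowerSeries.coeff_mk, PowerSeries.coeff_one, key, smul_mul_assoc, one_mul]
      rw [show (n:ℕ)+2 = n+1+1 from rfl, PowerSeries.coeff_succ_X_mul]
      simp [PowerSeries.coeff_C]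
  · simp only [hybSeq, hJ0, hJ1, hrec 0, hrec 1, hJ0, hJ1]
    ring_nf
  · simp only [hybSeq, hJ0, hJ1, hrec 0, hrec 1, hrec 2, hJ0, hJ1]
    rw [hyb_sub_smul]
    ring_nf
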